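/- Dual feasibility of the certificate: with H' = (1/d³) 1_{A₁⊗B₁} ⊗ [τ + 2 Σ_{i<j} a_i a_j T_{A₂}(ψ⁻_{ij})], for every maximally entangled state Ψ_k on A₁⊗B₁ one has (T_{A₁}⊗T_{A₂})(H' − (1/d²) Ψ_k ⊗ τ) = (1/d³) Υ_k ⊗ Γ + (2/d³) Σ_{i<j} a_i a_j (1 − Υ_k/2) ⊗ ψ⁻_{ij}, which is positive semidefinite, where Υ_k = 1 − d T_{A₁}(Ψ_k) and Γ = T_{A₂}(τ) + Σ_{i<j} a_i a_j ψ⁻_{ij}. -/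

import Mathlib

open scoped BigOperators Kronecker ComplexOrder
open Matrix

/-- Partial transposition on the first tensor factor (standard basis). -/
def ptA {α β : Type*} (M : Matrix (α × β) (α × β) ℂ) : Matrix (α × β) (α × β) ℂ :=
  Matrix.of fun p q => M (q.1, p.2) (p.1, q.2)

/-- Partial transposition `T_{A₁} ⊗ T_{A₂}` on an operator on `(A₁⊗B₁)⊗(A₂⊗B₂)`. -/
def pt12 {α₁ β₁ α₂ β₂ : Type*}
    (M : Matrix ((α₁ × β₁) × α₂ × β₂) ((α₁ × β₁) × α₂ × β₂) ℂ) :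
    Matrix ((α₁ × β₁) × α₂ × β₂) ((α₁ × β₁) × α₂ × β₂) ℂ :=
  Matrix.of fun p q =>
    M ((q.1.1, p.1.2), (q.2.1, p.2.2)) ((p.1.1, q.1.2), (p.2.1, q.2.2))

/-- Rank-one projector `|v⟩⟨v|`. -/
def proj {n : Type*} (v : n → ℂ) : Matrix n n ℂ :=
  Matrix.of fun p q => v p * (starRingEnd ℂ) (v q)

/-- `|ψ⁻ᵢⱼ⟩ = (|i⟩|j⟩ − |j⟩|i⟩)/√2`. -/
noncomputable def psiM (d : ℕ) (i j : Fin d) : Fin d × Fin d → ℂ := fun p =>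
  ((1 / Real.sqrt 2 : ℝ) : ℂ) * ((if p = (i, j) then 1 else 0) - (if p = (j, i) then 1 else 0))

section unitary
variable {d : ℕ} (α β : Fin d → Fin d → ℂ)

/-- `M (i,j) p = α j p.1 * conj (β i p.2)`. -/
def Mm (α β : Fin d → Fin d → ℂ) : Matrix (Fin d × Fin d) (Fin d × Fin d) ℂ :=
  Matrix.of fun r p => α r.2 p.1 * (starRingEnd ℂ) (β r.1 p.2)

def Pσ (d : ℕ) : Matrix (Fin d × Fin d) (Fin d × Fin d) ℂ :=
  Matrix.of fun r s => if s = (r.2, r.1) then 1 else 0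

lemma sum_mulVec {n : Type*} [Fintype n] {ι : Type*} (s : Finset ι)
    (f : ι → Matrix n n ℂ) (x : n → ℂ) :
    (∑ i ∈ s, f i) *ᵥ x = ∑ i ∈ s, f i *ᵥ x := by
  ext p
  simp only [Matrix.mulVec, dotProduct, Finset.sum_apply, Matrix.sum_apply, Finset.sum_mul]
  exact Finset.sum_comm

lemma proj_form {n : Type*} [Fintype n] (v x : n → ℂ) :
    dotProduct (star x) (proj v *ᵥ x)
      = star (∑ q, (starRingEnd ℂ) (v q) * x q) * (∑ q, (starRingEnd ℂ) (v q) * x q) := by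
  have hmv : proj v *ᵥ x = fun p => v p * ∑ q, (starRingEnd ℂ) (v q) * x q := by
    funext p
    simp [proj, Matrix.mulVec, dotProduct, Finset.mul_sum, mul_assoc]
  rw [hmv]
  simp only [dotProduct, Pi.star_apply, ← mul_assoc]
  rw [← Finset.sum_mul, star_sum]
  congr 1
  refine Finset.sum_congr rfl fun q _ => ?_
  simp [Complex.star_def, mul_comm]

lemma MmMmH (hα : ∀ i j, ∑ x, (starRingEnd ℂ) (α i x) * α j x = if i = j then 1 else 0)
    (hβ : ∀ i j, ∑ x, (starRingEnd ℂ) (β i x) * β j x = if i = j then 1 else 0) :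
    Mm α β * (Mm α β)ᴴ = 1 := by
  ext ⟨i, j⟩ ⟨k, l⟩
  simp only [Matrix.mul_apply, Matrix.conjTranspose_apply, Mm, Matrix.of_apply,
    Matrix.one_apply, Prod.mk.injEq]
  rw [Fintype.sum_prod_type]
  have : ∀ p1 : Fin d, ∑ p2 : Fin d,
      α j p1 * (starRingEnd ℂ) (β i p2) * star (α l p1 * (starRingEnd ℂ) (β k p2))
      = (α j p1 * star (α l p1)) * ∑ p2, (starRingEnd ℂ) (β i p2) * β k p2 := by
    intro p1
    rw [Finset.mul_sum]
    refine Finset.sum_congr rfl fun p2 _ => ?_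
    simp only [star_mul', Complex.star_def, RingHom.id_apply, Complex.conj_conj]
    ring
  simp only [this, hβ i k]
  rw [← Finset.sum_mul]
  have h2 : ∑ p1, α j p1 * star (α l p1) = if l = j then 1 else 0 := by
    rw [← hα l j]
    exact Finset.sum_congr rfl fun p1 _ => by rw [Complex.star_def]; ring
  rw [h2]
  by_cases h1 : i = k <;> by_cases h3 : j = l <;> simp [h1, h3, eq_comm]
end unitary

section more
variable {d : ℕ} (α β : Fin d → Fin d → ℂ)

lemma PσH : (Pσ d)ᴴ = Pσ d := by
  ext r s
  simp only [Matrix.conjTranspose_apply, Pσ, Matrix.of_apply, apply_ite, star_one, star_zero]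
  by_cases h : r = (s.2, s.1)
  · subst h; simp
  · rw [if_neg h, if_neg (fun hs => h (by subst hs; rfl))]


lemma Pσ2 : Pσ d * Pσ d = 1 := by
  ext r s
  simp only [Matrix.mul_apply, Pσ, Matrix.of_apply, ite_mul, one_mul, zero_mul,
    Finset.sum_ite_eq', Finset.mem_univ, if_true, Matrix.one_apply]
  simp [eq_comm]

lemma half_nonneg : (0:ℂ) ≤ (1/2 : ℂ) := by
  rw [Complex.le_def]
  norm_num

lemma psd_add {n : Type*} [Fintype n] {A B : Matrix n n ℂ} (hA : A.PosSemidef) (hB : B.PosSemidef) :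
    (A + B).PosSemidef :=
  .of_dotProduct_mulVec_nonneg (hA.1.add hB.1) fun x => by
    rw [Matrix.add_mulVec, dotProduct_add]
    exact add_nonneg (hA.dotProduct_mulVec_nonneg x) (hB.dotProduct_mulVec_nonneg x)

lemma psd_sum {n : Type*} [Fintype n] {ι : Type*} (s : Finset ι) (f : ι → Matrix n n ℂ)
    (h : ∀ i ∈ s, (f i).PosSemidef) : (∑ i ∈ s, f i).PosSemidef :=
  Finset.sum_induction f _ (fun _ _ ha hb => psd_add ha hb) Matrix.PosSemidef.zero h

lemma psd_smul {n : Type*} [Fintype n] {A : Matrix n n ℂ} (hA : A.PosSemidef) {c : ℂ} (hc : 0 ≤ c) :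
    (c • A).PosSemidef := by
  refine .of_dotProduct_mulVec_nonneg ?_ fun x => ?_
  · have hcr : star c = c := by
      rw [Complex.star_def, Complex.conj_eq_iff_im]
      exact ((Complex.le_def.mp hc).2).symm
    unfold Matrix.IsHermitian
    rw [Matrix.conjTranspose_smul, hcr, hA.1]
  · rw [Matrix.smul_mulVec, dotProduct_smul, smul_eq_mul]
    exact mul_nonneg hc (hA.dotProduct_mulVec_nonneg x)

lemma kron_conjT {n m : Type*} (A : Matrix n n ℂ) (B : Matrix m m ℂ) :
    (A ⊗ₖ B)ᴴ = Aᴴ ⊗ₖ Bᴴ := by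
  ext p q
  simp [Matrix.conjTranspose_apply, star_mul']

lemma psd_kron {n m : Type*} [Fintype n] [DecidableEq n] [Fintype m] [DecidableEq m]
    {A : Matrix n n ℂ} {B : Matrix m m ℂ} (hA : A.PosSemidef)
    (hB : B.PosSemidef) : (A ⊗ₖ B).PosSemidef := by
  exact hA.kronecker hB

lemma onePσ_psd : ((1 : Matrix (Fin d × Fin d) (Fin d × Fin d) ℂ) + Pσ d).PosSemidef := by
  have hH : ((1 : Matrix (Fin d × Fin d) (Fin d × Fin d) ℂ) + Pσ d)ᴴ = 1 + Pσ d := by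
    rw [Matrix.conjTranspose_add, Matrix.conjTranspose_one, PσH]
  have hsq : ((1 : Matrix (Fin d × Fin d) (Fin d × Fin d) ℂ) + Pσ d) * (1 + Pσ d)
      = (2:ℂ) • (1 + Pσ d) := by
    have h1 : ((1 : Matrix (Fin d × Fin d) (Fin d × Fin d) ℂ) + Pσ d) * (1 + Pσ d)
        = 1 + Pσ d + Pσ d + Pσ d * Pσ d := by noncomm_ring
    rw [h1, Pσ2, two_smul]
    abel
  have key : (1 : Matrix (Fin d × Fin d) (Fin d × Fin d) ℂ) + Pσ d
      = (1/2:ℂ) • (((1 : Matrix (Fin d × Fin d) (Fin d × Fin d) ℂ) + Pσ d)ᴴ * (1 + Pσ d)) := by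
    rw [hH, hsq, smul_smul]
    norm_num
  rw [key]
  exact psd_smul (Matrix.posSemidef_conjTranspose_mul_self _) half_nonneg

lemma onePσ_psd' : ((1 : Matrix (Fin d × Fin d) (Fin d × Fin d) ℂ) - Pσ d).PosSemidef := by
  have hH : ((1 : Matrix (Fin d × Fin d) (Fin d × Fin d) ℂ) - Pσ d)ᴴ = 1 - Pσ d := by
    rw [Matrix.conjTranspose_sub, Matrix.conjTranspose_one, PσH]
  have hsq : ((1 : Matrix (Fin d × Fin d) (Fin d × Fin d) ℂ) - Pσ d) * (1 - Pσ d)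
      = (2:ℂ) • (1 - Pσ d) := by
    have h1 : ((1 : Matrix (Fin d × Fin d) (Fin d × Fin d) ℂ) - Pσ d) * (1 - Pσ d)
        = 1 - Pσ d - Pσ d + Pσ d * Pσ d := by noncomm_ring
    rw [h1, Pσ2, two_smul]
    abel
  have key : (1 : Matrix (Fin d × Fin d) (Fin d × Fin d) ℂ) - Pσ d
      = (1/2:ℂ) • (((1 : Matrix (Fin d × Fin d) (Fin d × Fin d) ℂ) - Pσ d)ᴴ * (1 - Pσ d)) := by
    rw [hH, hsq, smul_smul]
    norm_num
  rw [key]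
  exact psd_smul (Matrix.posSemidef_conjTranspose_mul_self _) half_nonneg

lemma W_eq (hd : 0 < d) (Ψv : Fin d × Fin d → ℂ)
    (hΨv : ∀ p, Ψv p = ((1 / Real.sqrt d : ℝ) : ℂ) * ∑ i, α i p.1 * β i p.2) :
    (d : ℂ) • ptA (proj Ψv) = (Mm α β)ᴴ * (Pσ d * Mm α β) := by
  have hPσM : Pσ d * Mm α β
      = Matrix.of (fun r q : Fin d × Fin d => α r.1 q.1 * (starRingEnd ℂ) (β r.2 q.2)) := by
    ext r q
    simp [Pσ, Mm, Matrix.mul_apply, ite_mul, Finset.sum_ite_eq']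
  have hc : (d : ℂ) * (((1 / Real.sqrt d : ℝ) : ℂ) * ((1 / Real.sqrt d : ℝ) : ℂ)) = 1 := by
    rw [← Complex.ofReal_mul]
    rw [div_mul_div_comm, one_mul, Real.mul_self_sqrt (Nat.cast_nonneg d)]
    rw [Complex.ofReal_div, Complex.ofReal_one, Complex.ofReal_natCast]
    field_simp
  rw [hPσM]
  ext p q
  obtain ⟨p1, p2⟩ := p; obtain ⟨q1, q2⟩ := q
  simp only [Matrix.smul_apply, ptA, proj, Matrix.of_apply, smul_eq_mul,
    Matrix.mul_apply, Matrix.conjTranspose_apply, Mm, hΨv]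
  rw [Fintype.sum_prod_type]
  have hR : (∑ x : Fin d, ∑ y : Fin d,
        star (α (x, y).2 p1 * (starRingEnd ℂ) (β (x, y).1 p2)) *
          (α (x, y).1 q1 * (starRingEnd ℂ) (β (x, y).2 q2)))
      = (∑ x, α x q1 * β x p2) * (∑ y, (starRingEnd ℂ) (α y p1) * (starRingEnd ℂ) (β y q2)) := by
    rw [Finset.sum_mul_sum]
    refine Finset.sum_congr rfl fun x _ => Finset.sum_congr rfl fun y _ => ?_
    simp only [star_mul', Complex.star_def, Complex.conj_conj]
    ring
  rw [hR]
  simp only [_root_.map_mul, map_sum, Complex.conj_ofReal]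
  rw [show ↑d * ((↑(1 / Real.sqrt d) * ∑ x : Fin d, α x q1 * β x p2) *
      (↑(1 / Real.sqrt d) * ∑ y : Fin d, (starRingEnd ℂ) (α y p1) * (starRingEnd ℂ) (β y q2)))
    = (↑d * ((↑(1 / Real.sqrt d) : ℂ) * ↑(1 / Real.sqrt d))) *
      ((∑ x : Fin d, α x q1 * β x p2) * (∑ y : Fin d, (starRingEnd ℂ) (α y p1) * (starRingEnd ℂ) (β y q2)))
    from by ring]
  rw [hc, one_mul]
end more

section gamma
variable {d : ℕ}

lemma creal_nonneg {r : ℝ} (h : 0 ≤ r) : (0:ℂ) ≤ (r:ℂ) := by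
  rw [Complex.le_def]
  simp [h]

lemma dp_sum {n ι : Type*} [Fintype n] (s : Finset ι) (x : n → ℂ) (f : ι → (n → ℂ)) :
    dotProduct x (∑ i ∈ s, f i) = ∑ i ∈ s, dotProduct x (f i) := by
  simp only [dotProduct, Finset.sum_apply, Finset.mul_sum]
  exact Finset.sum_comm

lemma ptA_proj_herm {a b : Type*} (v : a × b → ℂ) : (ptA (proj v)).IsHermitian := by
  unfold Matrix.IsHermitian
  ext p q
  simp only [Matrix.conjTranspose_apply, ptA, proj, Matrix.of_apply, star_mul',
    Complex.star_def, Complex.conj_conj]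
  ring

lemma proj_psd {n : Type*} [Fintype n] (v : n → ℂ) : (proj v).PosSemidef := by
  refine .of_dotProduct_mulVec_nonneg ?_ fun x => ?_
  · unfold Matrix.IsHermitian
    ext p q
    simp only [Matrix.conjTranspose_apply, proj, Matrix.of_apply, star_mul',
      Complex.star_def, Complex.conj_conj]
    ring
  · rw [proj_form]
    exact star_mul_self_nonneg _

lemma gammaA (a : Fin d → ℝ) (τ : Fin d × Fin d → ℂ)
    (hτ : ∀ p : Fin d × Fin d, τ p = if p.1 = p.2 then (a p.1 : ℂ) else 0)
    (x : Fin d × Fin d → ℂ) :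
    dotProduct (star x) (ptA (proj τ) *ᵥ x)
      = ∑ i, ∑ j, ((a i * a j : ℝ) : ℂ) * (star (x (i, j)) * x (j, i)) := by
  simp only [dotProduct, Matrix.mulVec, ptA, proj, Matrix.of_apply, Pi.star_apply, hτ]
  rw [Fintype.sum_prod_type]
  refine Finset.sum_congr rfl fun i _ => ?_
  refine Finset.sum_congr rfl fun j _ => ?_
  rw [Fintype.sum_prod_type]
  simp only [apply_ite (starRingEnd ℂ), Complex.conj_ofReal, map_zero, ite_mul, zero_mul,
    mul_ite, mul_zero, Finset.sum_ite_eq', Finset.sum_ite_eq, Finset.mem_univ, if_true]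
  push_cast
  ring

end gamma

section gamma2
variable {d : ℕ}

lemma gammaPsi (i j : Fin d) (x : Fin d × Fin d → ℂ) :
    dotProduct (star x) (proj (psiM d i j) *ᵥ x)
      = (1/2 : ℂ) * (star (x (i, j) - x (j, i)) * (x (i, j) - x (j, i))) := by
  rw [proj_form]
  have hs : (∑ q, (starRingEnd ℂ) (psiM d i j q) * x q)
      = ((1 / Real.sqrt 2 : ℝ) : ℂ) * (x (i, j) - x (j, i)) := by
    simp only [psiM, _root_.map_mul, map_sub, apply_ite (starRingEnd ℂ), _root_.map_one,
      map_zero, Complex.conj_ofReal, mul_assoc]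
    rw [← Finset.mul_sum]
    congr 1
    simp only [sub_mul, ite_mul, one_mul, zero_mul, Finset.sum_sub_distrib,
      Finset.sum_ite_eq', Finset.mem_univ, if_true]
  rw [hs, star_mul', Complex.star_def, Complex.conj_ofReal]
  have h2 : ((1 / Real.sqrt 2 : ℝ) : ℂ) * ((1 / Real.sqrt 2 : ℝ) : ℂ) = 1/2 := by
    rw [← Complex.ofReal_mul, div_mul_div_comm, one_mul,
      Real.mul_self_sqrt (by norm_num : (0:ℝ) ≤ 2)]
    norm_num
  linear_combination ((starRingEnd ℂ) (x (i, j) - x (j, i)) * (x (i, j) - x (j, i))) * h2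

lemma sum_pairs {M : Type*} [AddCommMonoid M] {d : ℕ} (f : Fin d → Fin d → M) :
    ∑ i, ∑ j, f i j = (∑ i, f i i) + ∑ i, ∑ j ∈ Finset.Ioi i, (f i j + f j i) := by
  have h : ∑ i, ∑ j ∈ Finset.Ioi i, (f i j + f j i)
      = ∑ i, ∑ j ∈ ({i}ᶜ : Finset (Fin d)), f i j := by
    have := Finset.sum_sum_Ioi_add_eq_sum_sum_off_diag (fun i j => f j i)
    convert this using 2
  rw [h]
  rw [← Finset.sum_add_distrib]
  refine Finset.sum_congr rfl fun i _ => ?_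
  rw [add_comm, ← Finset.sum_compl_add_sum {i} (f i)]
  simp

lemma gamma_psd (a : Fin d → ℝ) (ha : ∀ i, 0 ≤ a i) (τ : Fin d × Fin d → ℂ)
    (hτ : ∀ p : Fin d × Fin d, τ p = if p.1 = p.2 then (a p.1 : ℂ) else 0) :
    (ptA (proj τ)
      + ∑ i, ∑ j ∈ Finset.Ioi i, ((a i * a j : ℝ) : ℂ) • proj (psiM d i j)).PosSemidef := by
  have hsumpsd : ∀ i : Fin d, ∀ j ∈ Finset.Ioi i,
      (((a i * a j : ℝ) : ℂ) • proj (psiM d i j)).PosSemidef := fun i j _ =>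
    psd_smul (proj_psd _) (creal_nonneg (mul_nonneg (ha i) (ha j)))
  refine .of_dotProduct_mulVec_nonneg ((ptA_proj_herm τ).add (psd_sum Finset.univ _ fun i _ => psd_sum _ _ (hsumpsd i)).1) ?_
  intro x
  rw [Matrix.add_mulVec, dotProduct_add]
  simp only [_root_.sum_mulVec, dp_sum, Matrix.smul_mulVec, dotProduct_smul, smul_eq_mul,
    gammaPsi]
  rw [gammaA a τ hτ x]
  rw [sum_pairs (fun i j => ((a i * a j : ℝ) : ℂ) * (star (x (i, j)) * x (j, i)))]
  rw [add_assoc, ← Finset.sum_add_distrib]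
  refine add_nonneg (Finset.sum_nonneg fun i _ =>
      mul_nonneg (creal_nonneg (mul_nonneg (ha i) (ha i))) (star_mul_self_nonneg _))
    (Finset.sum_nonneg fun i _ => ?_)
  rw [← Finset.sum_add_distrib]
  refine Finset.sum_nonneg fun j _ => ?_
  have hterm : (((a i * a j : ℝ) : ℂ) * (star (x (i, j)) * x (j, i))
        + ((a j * a i : ℝ) : ℂ) * (star (x (j, i)) * x (i, j)))
      + ((a i * a j : ℝ) : ℂ) * (1 / 2 * (star (x (i, j) - x (j, i)) * (x (i, j) - x (j, i))))
      = ((a i : ℝ) : ℂ) * ((a j : ℝ) : ℂ) *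
        ((1/2 : ℂ) * ((star (x (i, j)) + star (x (j, i))) * (x (i, j) + x (j, i)))) := by
    simp only [star_sub]
    push_cast
    ring
  rw [hterm]
  refine mul_nonneg (mul_nonneg (creal_nonneg (ha i)) (creal_nonneg (ha j)))
    (mul_nonneg half_nonneg ?_)
  rw [← star_add]
  exact star_mul_self_nonneg _
end gamma2


/-- Dual feasibility of the certificate: with
`H' = (1/d³) 1 ⊗ [τ + 2∑_{i<j} aᵢaⱼ T_{A₂}(ψ⁻ᵢⱼ)]`, for every maximally entangled
state `Ψₖ = |Ψ⟩⟨Ψ|`, `|Ψ⟩ = (1/√d)∑ᵢ|αᵢ⟩|βᵢ⟩` on `A₁⊗B₁`, one has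
`(T_{A₁}⊗T_{A₂})(H' − (1/d²)Ψₖ⊗τ) = (1/d³)Υₖ⊗Γ + (2/d³)∑_{i<j} aᵢaⱼ (1 − Υₖ/2)⊗ψ⁻ᵢⱼ`,
which is positive semidefinite, where `Υₖ = 1 − d·T_{A₁}(Ψₖ)` and
`Γ = T_{A₂}(τ) + ∑_{i<j} aᵢaⱼ ψ⁻ᵢⱼ`. -/
theorem stmt15 (d : ℕ) (hd : 0 < d) (a : Fin d → ℝ) (ha : ∀ i, 0 ≤ a i)
    (hsum : ∑ i, (a i) ^ 2 = 1)
    (τ : Fin d × Fin d → ℂ)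
    (hτ : ∀ p : Fin d × Fin d, τ p = if p.1 = p.2 then (a p.1 : ℂ) else 0)
    (α β : Fin d → Fin d → ℂ)
    (hα : ∀ i j, ∑ x, (starRingEnd ℂ) (α i x) * α j x = if i = j then 1 else 0)
    (hβ : ∀ i j, ∑ x, (starRingEnd ℂ) (β i x) * β j x = if i = j then 1 else 0)
    (Ψv : Fin d × Fin d → ℂ)
    (hΨv : ∀ p, Ψv p = ((1 / Real.sqrt d : ℝ) : ℂ) * ∑ i, α i p.1 * β i p.2)
    (Υ Γ : Matrix (Fin d × Fin d) (Fin d × Fin d) ℂ)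
    (hΥ : Υ = 1 - (d : ℂ) • ptA (proj Ψv))
    (hΓ : Γ = ptA (proj τ)
        + ∑ i, ∑ j ∈ Finset.Ioi i, ((a i * a j : ℝ) : ℂ) • proj (psiM d i j))
    (H' : Matrix ((Fin d × Fin d) × Fin d × Fin d) ((Fin d × Fin d) × Fin d × Fin d) ℂ)
    (hH' : H' = (1 / (d : ℂ) ^ 3) •
        ((1 : Matrix (Fin d × Fin d) (Fin d × Fin d) ℂ) ⊗ₖ
          (proj τ + (2 : ℂ) • ∑ i, ∑ j ∈ Finset.Ioi i,
            ((a i * a j : ℝ) : ℂ) • ptA (proj (psiM d i j))))) :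
    (pt12 (H' - (1 / (d : ℂ) ^ 2) • (proj Ψv ⊗ₖ proj τ))
        = (1 / (d : ℂ) ^ 3) • (Υ ⊗ₖ Γ)
          + (2 / (d : ℂ) ^ 3) • ∑ i, ∑ j ∈ Finset.Ioi i,
              ((a i * a j : ℝ) : ℂ) • ((1 - (1 / 2 : ℂ) • Υ) ⊗ₖ proj (psiM d i j)))
    ∧ (pt12 (H' - (1 / (d : ℂ) ^ 2) • (proj Ψv ⊗ₖ proj τ))).PosSemidef := by
  subst hΥ hΓ hH'
  have hd' : (d : ℂ) ≠ 0 := Nat.cast_ne_zero.mpr hd.ne'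
  have key : pt12 ((1 / (d : ℂ) ^ 3) •
        ((1 : Matrix (Fin d × Fin d) (Fin d × Fin d) ℂ) ⊗ₖ
          (proj τ + (2 : ℂ) • ∑ i, ∑ j ∈ Finset.Ioi i,
            ((a i * a j : ℝ) : ℂ) • ptA (proj (psiM d i j))))
        - (1 / (d : ℂ) ^ 2) • (proj Ψv ⊗ₖ proj τ))
      = (1 / (d : ℂ) ^ 3) • ((1 - (d : ℂ) • ptA (proj Ψv)) ⊗ₖ
            (ptA (proj τ) + ∑ i, ∑ j ∈ Finset.Ioi i,
              ((a i * a j : ℝ) : ℂ) • proj (psiM d i j)))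
          + (2 / (d : ℂ) ^ 3) • ∑ i, ∑ j ∈ Finset.Ioi i,
              ((a i * a j : ℝ) : ℂ) •
                ((1 - (1 / 2 : ℂ) • (1 - (d : ℂ) • ptA (proj Ψv))) ⊗ₖ proj (psiM d i j)) := by
    ext ⟨⟨p11, p12⟩, p21, p22⟩ ⟨⟨q11, q12⟩, q21, q22⟩
    simp only [pt12, ptA, proj, Matrix.of_apply, Matrix.sub_apply, Matrix.add_apply,
      Matrix.smul_apply, Matrix.kroneckerMap_apply, Matrix.sum_apply, Matrix.one_apply,
      smul_eq_mul, Prod.mk.injEq]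
    rw [show (if q11 = p11 ∧ p12 = q12 then (1:ℂ) else 0)
        = (if p11 = q11 ∧ p12 = q12 then (1:ℂ) else 0) by simp [eq_comm]]
    have hfac : ∀ E : ℂ,
        (∑ x : Fin d, ∑ y ∈ Finset.Ioi x, ((a x * a y : ℝ) : ℂ) *
          (E * (psiM d x y (p21, p22) * (starRingEnd ℂ) (psiM d x y (q21, q22)))))
        = E * ∑ x : Fin d, ∑ y ∈ Finset.Ioi x, ((a x * a y : ℝ) : ℂ) *
            (psiM d x y (p21, p22) * (starRingEnd ℂ) (psiM d x y (q21, q22))) := by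
      intro E
      rw [Finset.mul_sum]
      refine Finset.sum_congr rfl fun x _ => ?_
      rw [Finset.mul_sum]
      exact Finset.sum_congr rfl fun y _ => by ring
    rw [hfac]
    set E1 := (if p11 = q11 ∧ p12 = q12 then (1:ℂ) else 0) with hE1
    set P := Ψv (q11, p12) * (starRingEnd ℂ) (Ψv (p11, q12)) with hP
    set T := τ (q21, p22) * (starRingEnd ℂ) (τ (p21, q22)) with hT
    set S := ∑ x : Fin d, ∑ y ∈ Finset.Ioi x, ((a x * a y : ℝ) : ℂ) *
        (psiM d x y (p21, p22) * (starRingEnd ℂ) (psiM d x y (q21, q22))) with hS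
    field_simp
    ring
  refine ⟨key, ?_⟩
  rw [key]
  have hMMH := MmMmH α β hα hβ
  have hMHM : (Mm α β)ᴴ * Mm α β = 1 := mul_eq_one_comm.mp hMMH
  have hΥeq : (1 : Matrix (Fin d × Fin d) (Fin d × Fin d) ℂ) - (d : ℂ) • ptA (proj Ψv)
      = (Mm α β)ᴴ * ((1 - Pσ d) * Mm α β) := by
    rw [W_eq α β hd Ψv hΨv, sub_mul, one_mul, mul_sub, hMHM]
  have hΥpsd : ((1 : Matrix (Fin d × Fin d) (Fin d × Fin d) ℂ)
      - (d : ℂ) • ptA (proj Ψv)).PosSemidef := by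
    rw [hΥeq, ← mul_assoc]
    exact Matrix.PosSemidef.conjTranspose_mul_mul_same onePσ_psd' (Mm α β)
  have hGeq : (1 : Matrix (Fin d × Fin d) (Fin d × Fin d) ℂ)
        - (1/2 : ℂ) • ((1 : Matrix (Fin d × Fin d) (Fin d × Fin d) ℂ) - (d : ℂ) • ptA (proj Ψv))
      = (Mm α β)ᴴ * ((1/2 : ℂ) • ((1 : Matrix (Fin d × Fin d) (Fin d × Fin d) ℂ) + Pσ d))
          * (Mm α β) := by
    have h1 : (Mm α β)ᴴ * ((1/2 : ℂ) • ((1 : Matrix (Fin d × Fin d) (Fin d × Fin d) ℂ) + Pσ d))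
          * (Mm α β)
        = (1/2 : ℂ) • ((1 : Matrix (Fin d × Fin d) (Fin d × Fin d) ℂ)
            + (Mm α β)ᴴ * (Pσ d * Mm α β)) := by
      rw [mul_smul_comm, smul_mul_assoc, mul_add, mul_one, add_mul, mul_assoc, hMHM]
    rw [h1, W_eq α β hd Ψv hΨv]
    module
  have hGpsd : ((1 : Matrix (Fin d × Fin d) (Fin d × Fin d) ℂ)
      - (1/2 : ℂ) • ((1 : Matrix (Fin d × Fin d) (Fin d × Fin d) ℂ)
        - (d : ℂ) • ptA (proj Ψv))).PosSemidef := by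
    rw [hGeq]
    exact Matrix.PosSemidef.conjTranspose_mul_mul_same (psd_smul onePσ_psd half_nonneg) (Mm α β)
  have hΓpsd := gamma_psd a ha τ hτ
  have hc1 : (0:ℂ) ≤ 1 / (d : ℂ) ^ 3 := by
    have h : (1 / (d : ℂ) ^ 3) = ((1 / (d : ℝ) ^ 3 : ℝ) : ℂ) := by push_cast; ring
    rw [h]
    exact creal_nonneg (by positivity)
  have hc2 : (0:ℂ) ≤ 2 / (d : ℂ) ^ 3 := by
    have h : (2 / (d : ℂ) ^ 3) = ((2 / (d : ℝ) ^ 3 : ℝ) : ℂ) := by push_cast; ring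
    rw [h]
    exact creal_nonneg (by positivity)
  exact psd_add (psd_smul (psd_kron hΥpsd hΓpsd) hc1)
    (psd_smul (psd_sum Finset.univ _ fun i _ => psd_sum _ _ fun j _ =>
      psd_smul (psd_kron hGpsd (proj_psd _)) (creal_nonneg (mul_nonneg (ha i) (ha j)))) hc2)
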